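/- If X is a path-connected Hausdorff space and A ⊆ X is a finite disjoint union of closed path-connected subspaces A₁, A₂, …, A_k, then cat_X(A) = sup{ cat_X(A_i) : 1 ≤ i ≤ k }. -/

import Mathlib

open Set unitInterval Topology

/-- A point `x` of a topological space `X` is a *wild point* of `X` if every neighborhood `U`
of `x` contains a loop that is not null-homotopic in `X`. -/
def IsWildPoint {X : Type*} [TopologicalSpace X] (x : X) : Prop :=
  ∀ U ∈ 𝓝 x, ∃ (y : X) (γ : Path y y), Set.range ⇑γ ⊆ U ∧ ¬ γ.Homotopic (Path.refl y)

/-- The set of wild points of `X`. -/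
def wildSet (X : Type*) [TopologicalSpace X] : Set X := {x | IsWildPoint x}

/-- Iterated wild sets: `iterWild X 0 = X` and `iterWild X (n+1) = w(iterWild X n)`,
where the wild set of the subspace is taken with the subspace topology. -/
def iterWild (X : Type*) [TopologicalSpace X] : ℕ → Set X
  | 0 => Set.univ
  | n + 1 => Subtype.val '' wildSet ↥(iterWild X n)

/-- The wildness rank of `X`: the least `n` with `iterWild X n = ∅`, and `⊤` if none exists. -/
noncomputable def wildRank (X : Type*) [TopologicalSpace X] : ℕ∞ :=
  sInf ((↑) '' {n : ℕ | iterWild X n = ∅})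

/-- `X` is `w`-stable if every iterated wild set is locally path-connected. -/
def WStable (X : Type*) [TopologicalSpace X] : Prop :=
  ∀ n : ℕ, LocPathConnectedSpace ↥(iterWild X n)

/-- `X` has Lebesgue covering dimension at most one: every open cover admits an open
refinement which covers `X` and in which every point lies in at most two members. -/
def DimLEOne (X : Type*) [TopologicalSpace X] : Prop :=
  ∀ 𝒰 : Set (Set X), (∀ U ∈ 𝒰, IsOpen U) → ⋃₀ 𝒰 = Set.univ →
    ∃ 𝒱 : Set (Set X), (∀ V ∈ 𝒱, IsOpen V) ∧ ⋃₀ 𝒱 = Set.univ ∧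
      (∀ V ∈ 𝒱, ∃ U ∈ 𝒰, V ⊆ U) ∧
      ∀ x : X, ∃ V₁ V₂ : Set X, ∀ V ∈ 𝒱, x ∈ V → V = V₁ ∨ V = V₂

/-- A subset `A ⊆ X` is categorical in `X` if the inclusion `A → X` is homotopic to a
constant map. -/
def IsCategorical (X : Type*) [TopologicalSpace X] (A : Set X) : Prop :=
  ∃ y : X, ContinuousMap.Homotopic
    (⟨Subtype.val, continuous_subtype_val⟩ : C(↥A, X)) (ContinuousMap.const ↥A y)

/-- `A ⊆ X × X` admits a motion plan in `X` if the two coordinate projections `A → X`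
are homotopic. -/
def AdmitsMotionPlan (X : Type*) [TopologicalSpace X] (A : Set (X × X)) : Prop :=
  ContinuousMap.Homotopic
    (⟨fun p : A => (p : X × X).1, continuous_fst.comp continuous_subtype_val⟩ : C(↥A, X))
    (⟨fun p : A => (p : X × X).2, continuous_snd.comp continuous_subtype_val⟩ : C(↥A, X))

/-- The normalized Lusternik–Schnirelmann category of `X`, defined via closed filtrations
`∅ = F₋₁ ⊆ F 0 ⊆ ⋯ ⊆ F n = X` with categorical differences. -/
noncomputable def LSCat (X : Type*) [TopologicalSpace X] : ℕ∞ :=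
  sInf ((↑) '' {n : ℕ | ∃ F : ℕ → Set X, Monotone F ∧ (∀ j, IsClosed (F j)) ∧
    F n = Set.univ ∧ IsCategorical X (F 0) ∧ ∀ j < n, IsCategorical X (F (j + 1) \ F j)})

/-- The normalized topological complexity of `X`, defined via closed filtrations of `X × X`
whose differences admit motion plans. -/
noncomputable def TopComplexity (X : Type*) [TopologicalSpace X] : ℕ∞ :=
  sInf ((↑) '' {n : ℕ | ∃ F : ℕ → Set (X × X), Monotone F ∧ (∀ j, IsClosed (F j)) ∧
    F n = Set.univ ∧ AdmitsMotionPlan X (F 0) ∧ ∀ j < n, AdmitsMotionPlan X (F (j + 1) \ F j)})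

/-- The relative LS-category `cat_X(A)` defined via filtrations of `A` by subsets closed in `A`
whose differences are categorical in `X`. -/
noncomputable def relCat (X : Type*) [TopologicalSpace X] (A : Set X) : ℕ∞ :=
  sInf ((↑) '' {n : ℕ | ∃ F : ℕ → Set X, Monotone F ∧ (∀ j, F j ⊆ A) ∧
    (∀ j, IsClosed ((Subtype.val ⁻¹' F j : Set ↥A))) ∧ F n = A ∧
    IsCategorical X (F 0) ∧ ∀ j < n, IsCategorical X (F (j + 1) \ F j)})

/-- A simple closed curve in `X` is a subspace homeomorphic to the circle. -/
def IsSimpleClosedCurve {X : Type*} [TopologicalSpace X] (S : Set X) : Prop :=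
  Nonempty (↥S ≃ₜ Circle)

/-- A continuous map is `π₁`-injective if every based loop whose image is null-homotopic is
itself null-homotopic (equivalently, the induced homomorphism on fundamental groups is
injective at every basepoint). -/
def Pi1Injective {X Y : Type*} [TopologicalSpace X] [TopologicalSpace Y] (f : C(X, Y)) : Prop :=
  ∀ (x : X) (γ : Path x x), (γ.map f.continuous).Homotopic (Path.refl (f x)) →
    γ.Homotopic (Path.refl x)

section Helpers

variable {X : Type*} [TopologicalSpace X]

lemma isCategorical_empty [Nonempty X] : IsCategorical X (∅ : Set X) := by
  refine ⟨Classical.arbitrary X, ⟨?_⟩⟩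
  exact
    { toFun := fun z => isEmptyElim z.2
      continuous_toFun := continuous_of_const (fun a b => isEmptyElim a.2)
      map_zero_left := fun x => isEmptyElim x
      map_one_left := fun x => isEmptyElim x }

lemma IsCategorical.mono {A B : Set X} (h : IsCategorical X A) (hBA : B ⊆ A) :
    IsCategorical X B := by
  obtain ⟨y, hy⟩ := h
  refine ⟨y, ?_⟩
  have := hy.comp (ContinuousMap.Homotopic.refl
    (⟨Set.inclusion hBA, continuous_inclusion hBA⟩ : C(↥B, ↥A)))
  exact this

lemma homotopic_const {Z : Type*} [TopologicalSpace Z] {y y' : X} (γ : Path y y') :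
    ContinuousMap.Homotopic (ContinuousMap.const Z y) (ContinuousMap.const Z y') := by
  refine ⟨?_⟩
  exact
    { toFun := fun z => γ z.1
      continuous_toFun := γ.continuous.comp continuous_fst
      map_zero_left := fun x => γ.source
      map_one_left := fun x => γ.target }

lemma IsCategorical.to_point [PathConnectedSpace X] {A : Set X} (h : IsCategorical X A) (y : X) :
    ContinuousMap.Homotopic (⟨Subtype.val, continuous_subtype_val⟩ : C(↥A, X))
      (ContinuousMap.const ↥A y) := by
  obtain ⟨y₀, hy₀⟩ := h
  exact hy₀.trans (homotopic_const (PathConnectedSpace.somePath y₀ y))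

lemma isCategorical_iUnion [PathConnectedSpace X] {k : ℕ} {A S : Fin k → Set X}
    (hcl : ∀ i, IsClosed (A i)) (hdisj : Pairwise (Function.onFun Disjoint A))
    (hS : ∀ i, S i ⊆ A i) (hcat : ∀ i, IsCategorical X (S i)) :
    IsCategorical X (⋃ i, S i) := by
  classical
  obtain ⟨y⟩ : Nonempty X := inferInstance
  have hH : ∀ i, ContinuousMap.Homotopic
      (⟨Subtype.val, continuous_subtype_val⟩ : C(↥(S i), X))
      (ContinuousMap.const ↥(S i) y) := fun i => (hcat i).to_point y
  let H : ∀ i, ContinuousMap.Homotopy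
      (⟨Subtype.val, continuous_subtype_val⟩ : C(↥(S i), X))
      (ContinuousMap.const ↥(S i) y) := fun i => (hH i).some
  have huniq : ∀ (x : X) (i j : Fin k), x ∈ A i → x ∈ S j → j = i := by
    intro x i j hxi hxj
    by_contra hne'
    exact Set.disjoint_left.mp (hdisj hne') (hS j hxj) hxi
  have hmem : ∀ t : ↥(⋃ i, S i), ∃ i, (t : X) ∈ S i := fun t => Set.mem_iUnion.mp t.2
  let P : ↥(⋃ i, S i) → Fin k := fun t => (hmem t).choose
  have hP : ∀ t, (t : X) ∈ S (P t) := fun t => (hmem t).choose_spec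
  let g : I × ↥(⋃ i, S i) → X := fun z => H (P z.2) (z.1, ⟨(z.2 : X), hP z.2⟩)
  have hcont : Continuous g := by
    have hlf : LocallyFinite
        (fun i : Fin k => (fun z : I × ↥(⋃ i, S i) => (z.2 : X)) ⁻¹' (A i)) :=
      locallyFinite_of_finite _
    refine hlf.continuous ?_ ?_ ?_
    · ext z
      simp only [Set.mem_iUnion, Set.mem_univ, iff_true, Set.mem_preimage]
      obtain ⟨i, hi⟩ := hmem z.2
      exact ⟨i, hS i hi⟩
    · intro i; exact (hcl i).preimage (continuous_subtype_val.comp continuous_snd)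
    · intro i
      rw [continuousOn_iff_continuous_restrict]
      have hmem' : ∀ w : ↥((fun z : I × ↥(⋃ i, S i) => (z.2 : X)) ⁻¹' (A i)),
          (((w : I × ↥(⋃ i, S i)).2 : X)) ∈ S i := by
        intro w
        obtain ⟨j, hj⟩ := hmem (w : I × ↥(⋃ i, S i)).2
        rwa [huniq _ i j w.2 hj] at hj
      have heq : Set.restrict ((fun z : I × ↥(⋃ i, S i) => (z.2 : X)) ⁻¹' (A i)) g =
          fun (w : ↥((fun z : I × ↥(⋃ i, S i) => (z.2 : X)) ⁻¹' (A i))) =>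
            H i ((w : I × ↥(⋃ i, S i)).1, ⟨_, hmem' w⟩) := by
        funext w
        have hPw : P (w : I × ↥(⋃ i, S i)).2 = i :=
          huniq _ i _ w.2 (hP (w : I × ↥(⋃ i, S i)).2)
        have hHeq : ∀ (a : I) (x : X) (i j : Fin k), i = j → ∀ (hx : x ∈ S i) (hx' : x ∈ S j),
            H i (a, ⟨x, hx⟩) = H j (a, ⟨x, hx'⟩) := by
          rintro a x i j rfl hx hx'; rfl
        exact hHeq _ _ _ _ hPw _ _
      change Continuous (Set.restrict _ g)
      rw [heq]
      refine (H i).continuous.comp ?_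
      exact (continuous_fst.comp continuous_subtype_val).prodMk
        (Continuous.subtype_mk
          (continuous_subtype_val.comp (continuous_snd.comp continuous_subtype_val)) _)
  refine ⟨y, ⟨?_⟩⟩
  exact
    { toFun := g
      continuous_toFun := hcont
      map_zero_left := fun x => (H (P x)).apply_zero ⟨(x : X), hP x⟩
      map_one_left := fun x => (H (P x)).apply_one ⟨(x : X), hP x⟩ }

lemma exists_mem_of_sInf_coe_le {s : Set ℕ} {N : ℕ} (h : sInf ((↑) '' s : Set ℕ∞) ≤ N) :
    ∃ m ∈ s, m ≤ N := by
  by_contra hc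
  push_neg at hc
  have h1 : ((N + 1 : ℕ) : ℕ∞) ≤ sInf ((↑) '' s) := by
    refine le_sInf ?_
    rintro _ ⟨m, hm, rfl⟩
    exact_mod_cast hc m hm
  have h2 := h1.trans h
  have h3 : (N + 1 : ℕ) ≤ N := by exact_mod_cast h2
  omega

lemma closed_in_closed {A B : Set X} (hA : IsClosed A) (hB : B ⊆ A)
    (h : IsClosed (Subtype.val ⁻¹' B : Set ↥A)) : IsClosed B := by
  obtain ⟨D, hD, hDB⟩ := isClosed_induced_iff.mp h
  have hBE : B = D ∩ A := by
    ext x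
    constructor
    · intro hx
      refine ⟨?_, hB hx⟩
      have h1 : (⟨x, hB hx⟩ : ↥A) ∈ Subtype.val ⁻¹' B := hx
      rw [← hDB] at h1
      exact h1
    · rintro ⟨hxD, hxA⟩
      have h1 : (⟨x, hxA⟩ : ↥A) ∈ Subtype.val ⁻¹' D := hxD
      rw [hDB] at h1
      exact h1
  rw [hBE]; exact hD.inter hA

lemma closed_restrict {T B C : Set X} (hCT : C ⊆ T)
    (h : IsClosed (Subtype.val ⁻¹' B : Set ↥T)) :
    IsClosed (Subtype.val ⁻¹' (B ∩ C) : Set ↥C) := by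
  obtain ⟨D, hD, hDB⟩ := isClosed_induced_iff.mp h
  have hBE : (Subtype.val ⁻¹' (B ∩ C) : Set ↥C) = Subtype.val ⁻¹' D := by
    ext x
    simp only [Set.mem_preimage, Set.mem_inter_iff]
    constructor
    · rintro ⟨hB', _⟩
      have h1 : (⟨(x : X), hCT x.2⟩ : ↥T) ∈ Subtype.val ⁻¹' B := hB'
      rw [← hDB] at h1
      exact h1
    · intro hxD
      have h1 : (⟨(x : X), hCT x.2⟩ : ↥T) ∈ Subtype.val ⁻¹' D := hxD
      rw [hDB] at h1
      exact ⟨h1, x.2⟩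
  rw [hBE]; exact hD.preimage continuous_subtype_val

lemma relCat_pad [Nonempty X] {A : Set X} {m N : ℕ} (hmN : m ≤ N)
    (h : ∃ F : ℕ → Set X, Monotone F ∧ (∀ j, F j ⊆ A) ∧
      (∀ j, IsClosed ((Subtype.val ⁻¹' F j : Set ↥A))) ∧ F m = A ∧
      IsCategorical X (F 0) ∧ ∀ j < m, IsCategorical X (F (j + 1) \ F j)) :
    ∃ F : ℕ → Set X, Monotone F ∧ (∀ j, F j ⊆ A) ∧
      (∀ j, IsClosed ((Subtype.val ⁻¹' F j : Set ↥A))) ∧ F N = A ∧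
      IsCategorical X (F 0) ∧ ∀ j < N, IsCategorical X (F (j + 1) \ F j) := by
  obtain ⟨F, hmono, hsub, hclF, hFm, hF0, hdiff⟩ := h
  refine ⟨fun j => F (min j m), hmono.comp (monotone_id.min monotone_const),
    fun j => hsub _, fun j => hclF _, by show F (min N m) = A; rw [min_eq_right hmN, hFm],
    by simpa using hF0, ?_⟩
  intro j hj
  rcases lt_or_ge j m with hlt | hge
  · have h1 : min j m = j := min_eq_left hlt.le
    have h2 : min (j + 1) m = j + 1 := min_eq_left hlt
    show IsCategorical X (F (min (j + 1) m) \ F (min j m))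
    rw [h1, h2]
    exact hdiff j hlt
  · have h1 : min j m = m := min_eq_right hge
    have h2 : min (j + 1) m = m := min_eq_right (hge.trans (Nat.le_succ j))
    show IsCategorical X (F (min (j + 1) m) \ F (min j m))
    rw [h1, h2, Set.diff_self]
    exact isCategorical_empty

end Helpers

/-- If `A` is a finite disjoint union of closed path-connected subspaces `A₁, …, A_k`, then
`cat_X(A) = sup_i cat_X(A_i)`. -/
theorem relCat_finite_disjoint_union (X : Type*) [TopologicalSpace X] [T2Space X]
    [PathConnectedSpace X] (k : ℕ) (A : Fin k → Set X)
    (hcl : ∀ i, IsClosed (A i)) (hpc : ∀ i, IsPathConnected (A i))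
    (hdisj : Pairwise (Function.onFun Disjoint A)) :
    relCat X (⋃ i, A i) = ⨆ i, relCat X (A i) := by
  classical
  have hne : Nonempty X := inferInstance
  apply le_antisymm
  · rcases eq_top_or_lt_top (⨆ i, relCat X (A i)) with htop | hlt
    · rw [htop]; exact le_top
    obtain ⟨N, hN⟩ : ∃ N : ℕ, (⨆ i, relCat X (A i)) = (N : ℕ∞) := by
      obtain ⟨N, hN⟩ := WithTop.ne_top_iff_exists.mp hlt.ne
      exact ⟨N, hN.symm⟩
    rw [hN]
    have hle : ∀ i, relCat X (A i) ≤ (N : ℕ∞) := fun i => hN ▸ le_iSup (fun i => relCat X (A i)) i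
    have hFi : ∀ i, ∃ F : ℕ → Set X, Monotone F ∧ (∀ j, F j ⊆ A i) ∧
        (∀ j, IsClosed ((Subtype.val ⁻¹' F j : Set ↥(A i)))) ∧ F N = A i ∧
        IsCategorical X (F 0) ∧ ∀ j < N, IsCategorical X (F (j + 1) \ F j) := by
      intro i
      obtain ⟨m, hm, hmN⟩ := exists_mem_of_sInf_coe_le (hle i)
      exact relCat_pad hmN hm
    choose F hmono hsub hclo hFN hF0 hdiff using hFi
    refine sInf_le ⟨N, ?_, rfl⟩
    refine ⟨fun j => ⋃ i, F i j, ?_, ?_, ?_, ?_, ?_, ?_⟩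
    · intro a b hab
      exact Set.iUnion_mono fun i => hmono i hab
    · intro j
      exact Set.iUnion_mono fun i => hsub i j
    · intro j
      have : IsClosed (⋃ i, F i j) :=
        isClosed_iUnion_of_finite fun i => closed_in_closed (hcl i) (hsub i j) (hclo i j)
      exact this.preimage continuous_subtype_val
    · exact Set.iUnion_congr fun i => hFN i
    · exact isCategorical_iUnion hcl hdisj (fun i => hsub i 0) (fun i => hF0 i)
    · intro j hj
      have hdeq : (⋃ i, F i (j + 1)) \ (⋃ i, F i j) = ⋃ i, (F i (j + 1) \ F i j) := by
        ext x
        simp only [Set.mem_diff, Set.mem_iUnion]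
        constructor
        · rintro ⟨⟨i, hx1⟩, hx2⟩
          exact ⟨i, hx1, fun hxj => hx2 ⟨i, hxj⟩⟩
        · rintro ⟨i, hx1, hx2⟩
          refine ⟨⟨i, hx1⟩, ?_⟩
          rintro ⟨l, hxl⟩
          by_cases hli : l = i
          · exact hx2 (hli ▸ hxl)
          · exact Set.disjoint_left.mp (hdisj hli) (hsub l j hxl) (hsub i (j + 1) hx1)
      rw [hdeq]
      exact isCategorical_iUnion hcl hdisj
        (fun i => (Set.diff_subset.trans (hsub i (j + 1))))
        (fun i => (hdiff i j hj))
  · refine iSup_le fun i => ?_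
    refine sInf_le_sInf (Set.image_mono ?_)
    intro n hn
    obtain ⟨F, hmono, hsub, hclo, hFn, hF0, hdiff⟩ := hn
    refine ⟨fun j => F j ∩ A i, ?_, fun j => Set.inter_subset_right, ?_, ?_, ?_, ?_⟩
    · intro a b hab
      exact Set.inter_subset_inter (hmono hab) le_rfl
    · intro j
      exact closed_restrict (Set.subset_iUnion A i) (hclo j)
    · show F n ∩ A i = A i
      rw [hFn]
      exact Set.inter_eq_right.mpr (Set.subset_iUnion A i)
    · exact hF0.mono Set.inter_subset_left
    · intro j hj
      refine (hdiff j hj).mono ?_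
      rintro x ⟨⟨h1, h2⟩, h3⟩
      exact ⟨h1, fun hxj => h3 ⟨hxj, h2⟩⟩
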